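/- Rank-maximality can be expressed as utilitarian-maximality under lexicographic utilities: if each agent i receives utility (x·m)^{m−j} for each item from their j-th equivalence class, where x is the maximum item capacity and m the number of items, then an allocation maximizes the sum of these utilities if and only if its rank vector is lexicographically maximal among feasible allocations. -/

import Mathlib

open Finset

variable {A O : Type*}

/-- Feasibility: each item `o` is allocated to at most `cap o` agents. -/
def Feas18 [Fintype A] [DecidableEq A] [DecidableEq O] (cap : O → ℕ) (p : A → Finset O) : Prop :=
  ∀ o : O, (Finset.univ.filter fun a => o ∈ p a).card ≤ cap o

/-- Lexicographic utilities: an item of rank `j` for agent `a` is worth `(x·m)^(m-j)`. -/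
def lexU18 [Fintype A] [Fintype O] (rnk : A → O → ℕ) (x : ℕ) (p : A → Finset O) : ℕ :=
  ∑ a, ∑ o ∈ p a, (x * Fintype.card O) ^ (Fintype.card O - rnk a o)

/-- The rank vector of an allocation: `rvec p j` is the number of assignments of an item
to an agent for whom it has rank `j`. -/
def rvec18 [Fintype A] (rnk : A → O → ℕ) (p : A → Finset O) (j : ℕ) : ℕ :=
  ∑ a, ((p a).filter fun o => rnk a o = j).card

/-- `r` is lexicographically at least `r'`: either they agree everywhere, or at the first
coordinate where they differ `r` is larger. -/
def lexGE18 (r r' : ℕ → ℕ) : Prop :=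
  (∀ j, r j = r' j) ∨ ∃ j, (∀ k < j, r k = r' k) ∧ r' j < r j

section Aux

variable [Fintype A] [Fintype O] [DecidableEq A] [DecidableEq O]

/-- Sum of the rank vector over all possible ranks equals the total number of assignments. -/
lemma aux18_sum_rvec (rnk : A → O → ℕ) (h : ∀ a o, rnk a o ≤ Fintype.card O)
    (p : A → Finset O) :
    ∑ j ∈ Finset.range (Fintype.card O + 1), rvec18 rnk p j = ∑ a, (p a).card := by
  unfold rvec18
  rw [Finset.sum_comm]
  refine Finset.sum_congr rfl fun a _ => ?_
  exact (Finset.card_eq_sum_card_fiberwise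
    (fun o _ => Finset.mem_range.2 (Nat.lt_succ_of_le (h a o)))).symm

/-- Double counting: total assignments agent-wise equals item-wise. -/
lemma aux18_double_count (p : A → Finset O) :
    ∑ a, (p a).card = ∑ o, (Finset.univ.filter fun a => o ∈ p a).card := by
  simp only [Finset.card_filter]
  rw [Finset.sum_comm]
  refine Finset.sum_congr rfl fun a _ => ?_
  simp [Finset.card_filter]

lemma aux18_total_le (cap : O → ℕ) (x : ℕ) (hcap : ∀ o, cap o ≤ x)
    (p : A → Finset O) (hp : Feas18 cap p) :
    ∑ a, (p a).card ≤ x * Fintype.card O := by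
  rw [aux18_double_count]
  calc ∑ o, (Finset.univ.filter fun a => o ∈ p a).card ≤ ∑ _o : O, x :=
        Finset.sum_le_sum fun o _ => le_trans (hp o) (hcap o)
    _ = x * Fintype.card O := by
        rw [Finset.sum_const, smul_eq_mul, Finset.card_univ, mul_comm]

/-- lexU as a weighted sum of the rank vector. -/
lemma aux18_lexU_eq (rnk : A → O → ℕ) (h : ∀ a o, rnk a o ≤ Fintype.card O)
    (x : ℕ) (p : A → Finset O) :
    lexU18 rnk x p = ∑ j ∈ Finset.range (Fintype.card O + 1),
      rvec18 rnk p j * (x * Fintype.card O) ^ (Fintype.card O - j) := by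
  unfold lexU18 rvec18
  have step : ∀ a : A, ∑ o ∈ p a, (x * Fintype.card O) ^ (Fintype.card O - rnk a o)
      = ∑ j ∈ Finset.range (Fintype.card O + 1),
        ((p a).filter fun o => rnk a o = j).card
          * (x * Fintype.card O) ^ (Fintype.card O - j) := by
    intro a
    rw [← Finset.sum_fiberwise_of_maps_to
      (fun o _ => Finset.mem_range.2 (Nat.lt_succ_of_le (h a o)))
      (fun o => (x * Fintype.card O) ^ (Fintype.card O - rnk a o))]
    refine Finset.sum_congr rfl fun j _ => ?_
    rw [Finset.sum_congr rfl (fun o ho => by rw [(Finset.mem_filter.1 ho).2]),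
      Finset.sum_const, smul_eq_mul]
  simp only [step]
  rw [Finset.sum_comm]
  exact Finset.sum_congr rfl fun j _ => (Finset.sum_mul _ _ _).symm

end Aux


/-- Nonstrict comparison: if the first differing coordinate favours `r`, then the
weighted sum of `r` is at least that of `r'`, given the digit-sum bound on `r'`. -/
lemma aux18_key_le (B m j : ℕ) (hB : 1 ≤ B) (hj : j ≤ m) (r r' : ℕ → ℕ)
    (hr' : ∑ k ∈ Finset.range (m+1), r' k ≤ B)
    (hhead : ∀ k < j, r k = r' k)
    (hlt : r' j < r j) :
    ∑ k ∈ Finset.range (m+1), r' k * B ^ (m-k)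
      ≤ ∑ k ∈ Finset.range (m+1), r k * B ^ (m-k) := by
  have hsplit : ∀ f : ℕ → ℕ, ∑ k ∈ Finset.Ico 0 j, f k + ∑ k ∈ Finset.Ico j (m+1), f k
      = ∑ k ∈ Finset.range (m+1), f k := by
    intro f
    rw [Finset.range_eq_Ico]
    exact Finset.sum_Ico_consecutive f (Nat.zero_le _) (by omega)
  rw [← hsplit, ← hsplit (fun k => r k * B ^ (m-k))]
  have hheads : ∑ k ∈ Finset.Ico 0 j, r' k * B ^ (m-k)
      = ∑ k ∈ Finset.Ico 0 j, r k * B ^ (m-k) := by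
    refine Finset.sum_congr rfl fun k hk => ?_
    rw [hhead k (Finset.mem_Ico.1 hk).2]
  rw [hheads]
  have htailr : r j * B ^ (m-j) ≤ ∑ k ∈ Finset.Ico j (m+1), r k * B ^ (m-k) :=
    Finset.single_le_sum (f := fun k => r k * B ^ (m-k))
      (fun k _ => Nat.zero_le _) (Finset.mem_Ico.2 ⟨le_refl j, by omega⟩)
  have htailr' : ∑ k ∈ Finset.Ico j (m+1), r' k * B ^ (m-k) ≤ (r' j + 1) * B ^ (m-j) := by
    rcases eq_or_lt_of_le hj with h | h
    · subst h
      rw [Finset.sum_eq_sum_Ico_succ_bot (by omega)]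
      have : ∑ k ∈ Finset.Ico (j+1) (j+1), r' k * B ^ (j-k) = 0 := by simp
      rw [this]
      have : j - j = 0 := by omega
      rw [this]; nlinarith
    · rw [Finset.sum_eq_sum_Ico_succ_bot (by omega)]
      have h1 : ∑ k ∈ Finset.Ico (j+1) (m+1), r' k * B ^ (m-k)
          ≤ ∑ k ∈ Finset.Ico (j+1) (m+1), r' k * B ^ (m-j-1) := by
        refine Finset.sum_le_sum fun k hk => ?_
        exact Nat.mul_le_mul_left _ (Nat.pow_le_pow_right hB (by
          have := (Finset.mem_Ico.1 hk).1; omega))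
      have h2 : ∑ k ∈ Finset.Ico (j+1) (m+1), r' k * B ^ (m-j-1)
          = (∑ k ∈ Finset.Ico (j+1) (m+1), r' k) * B ^ (m-j-1) :=
        (Finset.sum_mul _ _ _).symm
      have h3 : ∑ k ∈ Finset.Ico (j+1) (m+1), r' k ≤ B := by
        refine le_trans (Finset.sum_le_sum_of_subset ?_) hr'
        rw [Finset.range_eq_Ico]
        exact Finset.Ico_subset_Ico (by omega) (le_refl _)
      have h4 : B * B ^ (m-j-1) = B ^ (m-j) := by
        rw [← pow_succ']
        congr 1; omega
      calc r' j * B ^ (m-j) + ∑ k ∈ Finset.Ico (j+1) (m+1), r' k * B ^ (m-k)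
          ≤ r' j * B ^ (m-j) + B * B ^ (m-j-1) := by
            refine Nat.add_le_add_left ?_ _
            exact le_trans h1 (h2 ▸ Nat.mul_le_mul_right _ h3)
        _ = (r' j + 1) * B ^ (m-j) := by rw [h4]; ring
  refine Nat.add_le_add_left (le_trans htailr' (le_trans ?_ htailr)) _
  exact Nat.mul_le_mul_right _ (by omega)


/-- If the first differing coordinate favours `r'` but the weighted sum of `r` is still
at least that of `r'`, then (given digit-sum bound on `r`) all of `r`'s mass is
concentrated at coordinate `j+1`, at the maximal value `B`. -/
lemma aux18_key_eq (B m j : ℕ) (hmB : m ≤ B) (hj1 : 1 ≤ j) (hjm : j ≤ m) (r r' : ℕ → ℕ)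
    (hr : ∑ k ∈ Finset.range (m+1), r k ≤ B)
    (hhead : ∀ k < j, r k = r' k)
    (hlt : r j < r' j)
    (hle : ∑ k ∈ Finset.range (m+1), r' k * B ^ (m-k)
      ≤ ∑ k ∈ Finset.range (m+1), r k * B ^ (m-k)) :
    j < m ∧ r (j+1) = B ∧ ∀ k ∈ Finset.range (m+1), k ≠ j+1 → r k = 0 := by
  have hsplit : ∀ f : ℕ → ℕ, ∑ k ∈ Finset.Ico 0 j, f k + ∑ k ∈ Finset.Ico j (m+1), f k
      = ∑ k ∈ Finset.range (m+1), f k := by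
    intro f
    rw [Finset.range_eq_Ico]
    exact Finset.sum_Ico_consecutive f (Nat.zero_le _) (by omega)
  -- cancel the equal heads in hle
  have hheads : ∑ k ∈ Finset.Ico 0 j, r' k * B ^ (m-k)
      = ∑ k ∈ Finset.Ico 0 j, r k * B ^ (m-k) := by
    refine Finset.sum_congr rfl fun k hk => (by rw [hhead k (Finset.mem_Ico.1 hk).2])
  rw [← hsplit, ← hsplit (fun k => r k * B ^ (m-k)), hheads] at hle
  have htail : ∑ k ∈ Finset.Ico j (m+1), r' k * B ^ (m-k)
      ≤ ∑ k ∈ Finset.Ico j (m+1), r k * B ^ (m-k) := by omega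
  have hlb : (r j + 1) * B ^ (m-j) ≤ ∑ k ∈ Finset.Ico j (m+1), r' k * B ^ (m-k) := by
    refine le_trans ?_ (Finset.single_le_sum (f := fun k => r' k * B ^ (m-k))
      (fun k _ => Nat.zero_le _) (Finset.mem_Ico.2 ⟨le_refl j, by omega⟩))
    exact Nat.mul_le_mul_right _ (by omega)
  -- rule out j = m
  have hjm' : j < m := by
    rcases eq_or_lt_of_le hjm with h | h
    · exfalso
      subst h
      have : Finset.Ico j (j+1) = {j} := by rw [Finset.Ico_add_one_right_eq_Icc, Finset.Icc_self]
      rw [this] at htail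
      simp at htail
      omega
    · exact h
  have hB2 : 2 ≤ B := by omega
  -- split off the j-th term
  rw [Finset.sum_eq_sum_Ico_succ_bot (by omega : j < m + 1) (fun k => r k * B ^ (m-k))]
    at htail
  set U := ∑ k ∈ Finset.Ico (j+1) (m+1), r k * B ^ (m-k) with hU
  have hU1 : B ^ (m-j) ≤ U := by
    have := le_trans hlb htail
    nlinarith
  set S := ∑ k ∈ Finset.Ico (j+1) (m+1), r k with hS
  have hUle : U ≤ S * B ^ (m-j-1) := by
    rw [hS, Finset.sum_mul]
    refine Finset.sum_le_sum fun k hk => ?_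
    exact Nat.mul_le_mul_left _ (Nat.pow_le_pow_right (by omega) (by
      have := (Finset.mem_Ico.1 hk).1; omega))
  have hsum_split : ∑ k ∈ Finset.Ico 0 (j+1), r k + S = ∑ k ∈ Finset.range (m+1), r k := by
    rw [hS, Finset.range_eq_Ico]
    exact Finset.sum_Ico_consecutive r (Nat.zero_le _) (by omega)
  have hSB : S ≤ B := by omega
  have hpow : B * B ^ (m-j-1) = B ^ (m-j) := by
    rw [← pow_succ']; congr 1; omega
  have hpowpos : 0 < B ^ (m-j-1) := Nat.pow_pos (by omega)
  have hSeq : S = B := by nlinarith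
  have hhead0 : ∑ k ∈ Finset.Ico 0 (j+1), r k = 0 := by omega
  have hUeq : U = S * B ^ (m-j-1) := by nlinarith
  -- from hUeq: each term is at its max, so r k = 0 for k > j+1
  have hterm : ∀ k ∈ Finset.Ico (j+1) (m+1), r k * B ^ (m-k) = r k * B ^ (m-j-1) := by
    have hle' : ∀ k ∈ Finset.Ico (j+1) (m+1), r k * B ^ (m-k) ≤ r k * B ^ (m-j-1) :=
      fun k hk => Nat.mul_le_mul_left _ (Nat.pow_le_pow_right (by omega) (by
        have := (Finset.mem_Ico.1 hk).1; omega))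
    have : ∑ k ∈ Finset.Ico (j+1) (m+1), r k * B ^ (m-j-1)
        = ∑ k ∈ Finset.Ico (j+1) (m+1), r k * B ^ (m-k) := by
      rw [← hU, hUeq, hS, Finset.sum_mul]
    intro k hk
    exact ((Finset.sum_eq_sum_iff_of_le hle').1 this.symm k hk)
  have hzero_hi : ∀ k, j + 1 < k → k ≤ m → r k = 0 := by
    intro k h1 h2
    have hk : k ∈ Finset.Ico (j+1) (m+1) := Finset.mem_Ico.2 ⟨by omega, by omega⟩
    have := hterm k hk
    by_contra hr0
    have hplt : B ^ (m-k) < B ^ (m-j-1) := Nat.pow_lt_pow_right (by omega) (by omega)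
    have : r k * B ^ (m-k) < r k * B ^ (m-j-1) :=
      (Nat.mul_lt_mul_left (Nat.pos_of_ne_zero hr0)).2 hplt
    omega
  have hzero_lo : ∀ k, k ≤ j → r k = 0 := by
    intro k hk
    have hk' : k ∈ Finset.Ico 0 (j+1) := Finset.mem_Ico.2 ⟨Nat.zero_le _, by omega⟩
    have := Finset.sum_eq_zero_iff.1 hhead0 k hk'
    exact this
  have hrj1 : r (j+1) = B := by
    have : ∑ k ∈ Finset.Ico (j+1) (m+1), r k = r (j+1) := by
      refine Finset.sum_eq_single_of_mem _ (Finset.mem_Ico.2 ⟨le_refl _, by omega⟩) ?_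
      intro k hk hne
      have h1 := (Finset.mem_Ico.1 hk).1
      have h2 := (Finset.mem_Ico.1 hk).2
      exact hzero_hi k (by omega) (by omega)
    omega
  refine ⟨hjm', hrj1, fun k hk hne => ?_⟩
  have hk' := Finset.mem_range.1 hk
  rcases le_or_gt k j with h | h
  · exact hzero_lo k h
  · exact hzero_hi k (by omega) (by omega)


section Main

variable [Fintype A] [Fintype O] [DecidableEq A] [DecidableEq O]

lemma aux18_rvec_ne (rnk : A → O → ℕ) (q : A → Finset O) (j : ℕ)
    (h : rvec18 rnk q j ≠ 0) : ∃ a o, o ∈ q a ∧ rnk a o = j := by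
  obtain ⟨a, -, ha⟩ := Finset.exists_ne_zero_of_sum_ne_zero h
  obtain ⟨o, ho⟩ := Finset.card_ne_zero.1 ha
  exact ⟨a, o, (Finset.mem_filter.1 ho).1, (Finset.mem_filter.1 ho).2⟩

end Main

theorem stmt18 [Fintype A] [Fintype O] [DecidableEq A] [DecidableEq O]
    (rnk : A → O → ℕ)
    (hrnk : ∀ (a : A) (o : O), 1 ≤ rnk a o ∧ rnk a o ≤ Fintype.card O)
    (cap : O → ℕ) (x : ℕ) (hx : 1 ≤ x) (hcap : ∀ o : O, cap o ≤ x)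
    (p : A → Finset O) (hp : Feas18 cap p) :
    (∀ q : A → Finset O, Feas18 cap q → lexU18 rnk x q ≤ lexU18 rnk x p) ↔
    (∀ q : A → Finset O, Feas18 cap q → lexGE18 (rvec18 rnk p) (rvec18 rnk q)) := by
  classical
  set m := Fintype.card O with hm
  set B := x * m with hB
  have hr_le : ∀ a o, rnk a o ≤ m := fun a o => (hrnk a o).2
  have hmB : m ≤ B := Nat.le_mul_of_pos_left m hx
  have hsum_le : ∀ q : A → Finset O, Feas18 cap q →
      ∑ k ∈ Finset.range (m+1), rvec18 rnk q k ≤ B := by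
    intro q hq
    rw [aux18_sum_rvec rnk hr_le q]
    exact aux18_total_le cap x hcap q hq
  constructor
  · -- utility-max → lex-max
    intro hmax q hq
    by_cases hall : ∀ j, rvec18 rnk p j = rvec18 rnk q j
    · exact Or.inl hall
    · push_neg at hall
      have hex := hall
      set j := Nat.find hex with hjdef
      have hspec : rvec18 rnk p j ≠ rvec18 rnk q j := Nat.find_spec hex
      have hmin : ∀ k < j, rvec18 rnk p k = rvec18 rnk q k := by
        intro k hk
        by_contra hne
        exact absurd hk (not_lt.2 (Nat.find_le hne))
      rcases lt_or_gt_of_ne hspec with hjlt | hjgt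
      · -- rvec p j < rvec q j: derive a contradiction via an exchange
        exfalso
        obtain ⟨a₀, o₀, ho₀q, ho₀r⟩ := aux18_rvec_ne rnk q j (by omega)
        have hj1 : 1 ≤ j := ho₀r ▸ (hrnk a₀ o₀).1
        have hjm : j ≤ m := ho₀r ▸ (hrnk a₀ o₀).2
        have hle : ∑ k ∈ Finset.range (m+1), rvec18 rnk q k * B ^ (m-k)
            ≤ ∑ k ∈ Finset.range (m+1), rvec18 rnk p k * B ^ (m-k) := by
          have := hmax q hq
          rwa [aux18_lexU_eq rnk hr_le x q, aux18_lexU_eq rnk hr_le x p] at this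
        obtain ⟨hjm', hrj1, hzero⟩ := aux18_key_eq B m j hmB hj1 hjm
          (rvec18 rnk p) (rvec18 rnk q) (hsum_le p hp) hmin hjlt hle
        -- every assignment in p has rank j+1
        have hallrank : ∀ a, ∀ o ∈ p a, rnk a o = j + 1 := by
          intro a o ho
          by_contra hne
          have hkmem : rnk a o ∈ Finset.range (m+1) :=
            Finset.mem_range.2 (Nat.lt_succ_of_le (hr_le a o))
          have h0 := hzero (rnk a o) hkmem hne
          have h0a := Finset.sum_eq_zero_iff.1 h0 a (Finset.mem_univ a)
          have : o ∈ (p a).filter fun o' => rnk a o' = rnk a o :=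
            Finset.mem_filter.2 ⟨ho, rfl⟩
          rw [Finset.card_eq_zero] at h0a
          rw [h0a] at this
          exact absurd this (Finset.notMem_empty o)
        -- every item is allocated exactly x times in p
        have htotal : ∑ o, (Finset.univ.filter fun a => o ∈ p a).card = B := by
          rw [← aux18_double_count, ← aux18_sum_rvec rnk hr_le p]
          rw [Finset.sum_eq_single_of_mem (j+1)
            (Finset.mem_range.2 (by omega)) (fun k hk hne => hzero k hk hne)]
          exact hrj1
        have hcnt : ∀ o : O, (Finset.univ.filter fun a => o ∈ p a).card = x := by
          have hle' : ∀ o ∈ (Finset.univ : Finset O),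
              (Finset.univ.filter fun a => o ∈ p a).card ≤ x :=
            fun o _ => le_trans (hp o) (hcap o)
          have heq : ∑ o : O, (x : ℕ) = ∑ o, (Finset.univ.filter fun a => o ∈ p a).card := by
            rw [htotal, Finset.sum_const, smul_eq_mul, Finset.card_univ, hB, mul_comm]
          intro o
          exact ((Finset.sum_eq_sum_iff_of_le hle').1 heq.symm o (Finset.mem_univ o))
        have hcap₀ : cap o₀ = x := le_antisymm (hcap o₀) (hcnt o₀ ▸ hp o₀)
        have ho₀p : o₀ ∉ p a₀ := by
          intro hmem
          have := hallrank a₀ o₀ hmem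
          omega
        -- find an agent b currently holding o₀
        have : (Finset.univ.filter fun a => o₀ ∈ p a).Nonempty := by
          rw [← Finset.card_ne_zero, hcnt o₀]; omega
        obtain ⟨b, hb⟩ := this
        have hbo₀ : o₀ ∈ p b := (Finset.mem_filter.1 hb).2
        have hba : b ≠ a₀ := fun h => ho₀p (h ▸ hbo₀)
        have hbr : rnk b o₀ = j + 1 := hallrank b o₀ hbo₀
        -- the exchange allocation
        set q2 : A → Finset O := fun a =>
          if a = a₀ then insert o₀ (p a₀) else if a = b then (p b).erase o₀ else p a
          with hq2def
        have hq2a₀ : q2 a₀ = insert o₀ (p a₀) := by simp [hq2def]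
        have hq2b : q2 b = (p b).erase o₀ := by simp [hq2def, hba]
        have hq2other : ∀ a, a ≠ a₀ → a ≠ b → q2 a = p a := by
          intro a h1 h2; simp [hq2def, h1, h2]
        have hq2 : Feas18 cap q2 := by
          intro o
          by_cases ho : o = o₀
          · subst ho
            have hfeq : (Finset.univ.filter fun a => o ∈ q2 a)
                = insert a₀ ((Finset.univ.filter fun a => o ∈ p a).erase b) := by
              ext a
              by_cases h1 : a = a₀
              · subst h1; simp [hq2a₀]
              · by_cases h2 : a = b
                · subst h2; simp [hq2b, h1, hba]
                · simp [hq2other a h1 h2, h1, h2]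
            rw [hfeq, Finset.card_insert_of_notMem (by
              simp only [Finset.mem_erase, Finset.mem_filter]
              intro hcon
              exact ho₀p hcon.2.2),
              Finset.card_erase_of_mem hb, hcnt o, hcap₀]
            omega
          · have hfeq : (Finset.univ.filter fun a => o ∈ q2 a)
                = Finset.univ.filter fun a => o ∈ p a := by
              ext a
              by_cases h1 : a = a₀
              · subst h1; simp [hq2a₀, ho]
              · by_cases h2 : a = b
                · subst h2; simp [hq2b, ho, hba]
                · simp [hq2other a h1 h2]
            rw [hfeq]
            exact hp o
        -- utility comparison
        have hbmem : b ∈ Finset.univ.erase a₀ := Finset.mem_erase.2 ⟨hba, Finset.mem_univ b⟩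
        have expand : ∀ f : A → ℕ,
            ∑ a, f a = (∑ a ∈ (Finset.univ.erase a₀).erase b, f a) + f b + f a₀ := by
          intro f
          have h1 : ∑ a ∈ (Finset.univ.erase a₀).erase b, f a + f b
              = ∑ a ∈ Finset.univ.erase a₀, f a := Finset.sum_erase_add _ f hbmem
          have h2 : ∑ a ∈ Finset.univ.erase a₀, f a + f a₀ = ∑ a, f a :=
            Finset.sum_erase_add _ f (Finset.mem_univ a₀)
          omega
        have e1 : ∑ o ∈ q2 a₀, B ^ (m - rnk a₀ o)
            = B ^ (m - j) + ∑ o ∈ p a₀, B ^ (m - rnk a₀ o) := by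
          rw [hq2a₀, Finset.sum_insert ho₀p, ho₀r]
        have e2 : (∑ o ∈ q2 b, B ^ (m - rnk b o)) + B ^ (m - (j+1))
            = ∑ o ∈ p b, B ^ (m - rnk b o) := by
          rw [hq2b, ← hbr]
          exact Finset.sum_erase_add (p b) _ hbo₀
        have e3 : ∑ a ∈ (Finset.univ.erase a₀).erase b, ∑ o ∈ q2 a, B ^ (m - rnk a o)
            = ∑ a ∈ (Finset.univ.erase a₀).erase b, ∑ o ∈ p a, B ^ (m - rnk a o) := by
          refine Finset.sum_congr rfl fun a ha => ?_
          have h2 := (Finset.mem_erase.1 ha).1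
          have h1 := (Finset.mem_erase.1 (Finset.mem_erase.1 ha).2).1
          rw [hq2other a h1 h2]
        have hkey : lexU18 rnk x q2 + B ^ (m - (j+1)) = lexU18 rnk x p + B ^ (m - j) := by
          unfold lexU18
          rw [← hm, ← hB]
          rw [expand (fun a => ∑ o ∈ q2 a, B ^ (m - rnk a o)),
            expand (fun a => ∑ o ∈ p a, B ^ (m - rnk a o))]
          omega
        have hlt2 : B ^ (m - (j+1)) < B ^ (m - j) :=
          Nat.pow_lt_pow_right (by omega) (by omega)
        have := hmax q2 hq2
        omega
      · exact Or.inr ⟨j, hmin, hjgt⟩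
  · -- lex-max → utility-max
    intro hlex q hq
    rcases hlex q hq with heq | ⟨j, hhead, hlt⟩
    · rw [aux18_lexU_eq rnk hr_le x q, aux18_lexU_eq rnk hr_le x p]
      exact le_of_eq (Finset.sum_congr rfl fun k _ => by rw [heq k])
    · obtain ⟨a₁, o₁, ho₁p, ho₁r⟩ := aux18_rvec_ne rnk p j (by omega)
      have hjm : j ≤ m := ho₁r ▸ (hrnk a₁ o₁).2
      have hm1 : 1 ≤ m := le_trans (ho₁r ▸ (hrnk a₁ o₁).1) hjm
      rw [aux18_lexU_eq rnk hr_le x q, aux18_lexU_eq rnk hr_le x p]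
      exact aux18_key_le B m j (by omega) hjm (rvec18 rnk p) (rvec18 rnk q)
        (hsum_le q hq) hhead hlt
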